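/- Let B be an n×n real symmetric positive definite matrix and let P_1, …, P_n be the associated lumped preconditioners. Then for every i = 1, …, n−1 and every k = 1, …, n, λ_k(B, P_i) ≤ λ_k(B, P_{i+1}); consequently, for any symmetric positive definite matrix K ∈ ℝ^{n×n}, λ_k(K, 𝓛(B)) = λ_k(K, P_1) ≤ λ_k(K, P_2) ≤ … ≤ λ_k(K, P_n) = λ_k(K, B) for all k = 1, …, n. -/

import Mathlib

open Matrix

/-- The Euclidean norm of a vector. -/
noncomputable def enorm {m : Type*} [Fintype m] (v : m → ℝ) : ℝ :=
  Real.sqrt (∑ i, (v i) ^ 2)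

/-- The `k`-th smallest generalized eigenvalue (counted with multiplicity) of the
symmetric pencil `(A, B)` with `B` positive definite, i.e. the `k`-th smallest root of
`det (A - λ B) = 0`.  It is defined as the `k`-th smallest eigenvalue of the Hermitian
matrix `√(B⁻¹) * A * √(B⁻¹)`, which is similar to `B⁻¹ * A`.  Junk value `0` is returned
if `A` is not symmetric or `B` is not positive definite. -/
noncomputable def genEig {m : Type*} [Fintype m] [DecidableEq m]
    (A B : Matrix m m ℝ) (k : Fin (Fintype.card m)) : ℝ :=
  letI := Classical.propDecidable
  if h : A.IsHermitian ∧ B.PosDef then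
    let S : Matrix m m ℝ := open scoped MatrixOrder in CFC.sqrt B⁻¹
    have hS : S.IsHermitian := open scoped MatrixOrder in (CFC.sqrt_nonneg B⁻¹).posSemidef.isHermitian
    have hC : (S * A * S).IsHermitian := by
      show (S * A * S)ᴴ = S * A * S
      rw [conjTranspose_mul, conjTranspose_mul, hS.eq, h.1.eq, Matrix.mul_assoc]
    let f : Fin (Fintype.card m) → ℝ := hC.eigenvalues₀
    f (Tuple.sort f k)
  else 0

/-- The `k`-th smallest generalized eigenvalue of a pencil of `n × n` matrices,
indexed by `Fin n`.  `genEigFin A B 0` is the smallest one, `λ_1(A,B)`, and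
`genEigFin A B (Fin.last _)` is the largest one, `λ_n(A,B)`. -/
noncomputable def genEigFin {n : ℕ} (A B : Matrix (Fin n) (Fin n) ℝ) (k : Fin n) : ℝ :=
  genEig A B (Fin.cast (Fintype.card_fin n).symm k)

/-- The (row-sum) lumping operator: `lump B` is the diagonal matrix whose `i`-th
diagonal entry is the sum of the absolute values of the entries of the `i`-th row of `B`. -/
noncomputable def lump {m : Type*} [Fintype m] [DecidableEq m]
    (B : Matrix m m ℝ) : Matrix m m ℝ :=
  Matrix.diagonal fun i => ∑ j, |B i j|

/-- The banded part `D_i` of a matrix: it keeps all sub- and super-diagonals of index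
smaller than `i` (i.e. the entries with `|j - k| < i`) and sets the rest to zero. -/
def diagBand {n : ℕ} (B : Matrix (Fin n) (Fin n) ℝ) (i : ℕ) : Matrix (Fin n) (Fin n) ℝ :=
  Matrix.of fun j k => if |((j : ℕ) : ℤ) - ((k : ℕ) : ℤ)| < (i : ℤ) then B j k else 0

/-- The lumped preconditioner `P_i = D_i + 𝓛(R_i)` where `B = D_i + R_i`, `D_i` being the
banded part of `B` of bandwidth `i` and `R_i` the remainder. -/
noncomputable def precond {n : ℕ} (B : Matrix (Fin n) (Fin n) ℝ) (i : ℕ) :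
    Matrix (Fin n) (Fin n) ℝ :=
  diagBand B i + lump (B - diagBand B i)



section Sq
open scoped MatrixOrder

section AuxSpan
set_option linter.unusedSectionVars false
variable {m : Type*} [Fintype m] [DecidableEq m]

private lemma dot_conj (T M : Matrix m m ℝ) (y : m → ℝ) :
    (T *ᵥ y) ⬝ᵥ (M *ᵥ (T *ᵥ y)) = y ⬝ᵥ ((Tᵀ * M * T) *ᵥ y) := by
  rw [dotProduct_mulVec (T *ᵥ y) M, dotProduct_mulVec ((T *ᵥ y) ᵥ* M) T,
    dotProduct_mulVec y (Tᵀ * M * T), ← vecMul_transpose T y, vecMul_vecMul, vecMul_vecMul]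
  rw [Matrix.mul_assoc]

private lemma dot_diagonal (v y : m → ℝ) : y ⬝ᵥ (diagonal v *ᵥ y) = ∑ j, v j * y j ^ 2 := by
  simp only [dotProduct, mulVec_diagonal]
  exact Finset.sum_congr rfl fun j _ => by ring

private lemma dot_one (y : m → ℝ) : y ⬝ᵥ ((1 : Matrix m m ℝ) *ᵥ y) = ∑ j, y j ^ 2 := by
  simp [one_mulVec, dotProduct, sq]

private def coordSub (s : Finset m) : Submodule ℝ (m → ℝ) where
  carrier := {x | ∀ j ∉ s, x j = 0}
  add_mem' := fun ha hb j hj => by simp [ha j hj, hb j hj]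
  zero_mem' := fun j _ => rfl
  smul_mem' := fun c x hx j hj => by simp [hx j hj]

private def spanS (s : Finset m) : Submodule ℝ (m → ℝ) :=
  Submodule.span ℝ (Set.range fun j : s => Pi.single (j : m) (1 : ℝ))

private lemma spanS_apply {s : Finset m} {x : m → ℝ} (hx : x ∈ spanS s) :
    ∀ j ∉ s, x j = 0 := by
  have hle : spanS s ≤ coordSub s := by
    rw [spanS, Submodule.span_le]
    rintro x ⟨j, rfl⟩ a ha
    exact Pi.single_eq_of_ne (fun h : a = (j : m) => ha (h ▸ j.2)) 1
  exact hle hx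

private lemma finrank_spanS (s : Finset m) : Module.finrank ℝ (spanS s) = s.card := by
  have hli : LinearIndependent ℝ (fun j : s => (Pi.single (j : m) (1 : ℝ) : m → ℝ)) := by
    have h2 := (Pi.basisFun ℝ m).linearIndependent.comp
      (Subtype.val : {x // x ∈ s} → m) Subtype.val_injective
    simpa [Function.comp_def] using h2
  rw [spanS, finrank_span_eq_card hli, Fintype.card_coe]

private lemma exists_subspace (A P : Matrix m m ℝ) (hP : P.PosDef)
    (hC : (CFC.sqrt P⁻¹ * A * CFC.sqrt P⁻¹).IsHermitian)
    (s : Finset m) :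
    ∃ W : Submodule ℝ (m → ℝ), Module.finrank ℝ W = s.card ∧
      ∀ x ∈ W, ∃ y : m → ℝ, (∀ j ∉ s, y j = 0) ∧
        x ⬝ᵥ (A *ᵥ x) = ∑ j, hC.eigenvalues j * y j ^ 2 ∧
        x ⬝ᵥ (P *ᵥ x) = ∑ j, y j ^ 2 := by
  set S := CFC.sqrt P⁻¹ with hSdef
  have hS : S.IsHermitian := (CFC.sqrt_nonneg P⁻¹).posSemidef.isHermitian
  have hSS : S * S = P⁻¹ := CFC.sqrt_mul_sqrt_self P⁻¹ (Matrix.nonneg_iff_posSemidef.mpr hP.inv.posSemidef)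
  have hdetS : IsUnit S.det := by
    have h1 : S.det * S.det = P⁻¹.det := by rw [← det_mul, hSS]
    have h2 : P⁻¹.det ≠ 0 := hP.inv.det_pos.ne'
    exact isUnit_iff_ne_zero.mpr fun h => h2 (by rw [← h1, h, mul_zero])
  have hSPS : S * P * S = 1 := by
    have hPinv : P = S⁻¹ * S⁻¹ := by
      rw [← Matrix.mul_inv_rev, hSS, Matrix.nonsing_inv_nonsing_inv _ hP.det_pos.ne'.isUnit]
    rw [hPinv, ← Matrix.mul_assoc, Matrix.mul_nonsing_inv _ hdetS,
      Matrix.one_mul, Matrix.nonsing_inv_mul _ hdetS]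
  set U : Matrix m m ℝ := (hC.eigenvectorUnitary : Matrix m m ℝ) with hUdef
  have hU2 : U * star U = 1 := mem_unitaryGroup_iff.mp hC.eigenvectorUnitary.2
  have hU1 : star U * U = 1 := mul_eq_one_comm.mp hU2
  have hdiag : star U * (S * A * S) * U = diagonal hC.eigenvalues := by
    have h := hC.conjStarAlgAut_star_eigenvectorUnitary
    simpa using h
  set T := S * U with hT
  have hdetT : IsUnit T.det := by
    rw [hT, det_mul]
    exact hdetS.mul (IsUnit.of_mul_eq_one _ (by rw [← det_mul, hU2, det_one]))
  have hTinv : Invertible T := T.invertibleOfIsUnitDet hdetT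
  have hTt : Tᵀ = star U * S := by
    rw [hT, transpose_mul, star_eq_conjTranspose, ← conjTranspose_eq_transpose_of_trivial,
      ← conjTranspose_eq_transpose_of_trivial, hS.eq]
  refine ⟨Submodule.map ((T.toLinearEquiv' hTinv : (m → ℝ) ≃ₗ[ℝ] (m → ℝ)) :
      (m → ℝ) →ₗ[ℝ] (m → ℝ)) (spanS s), ?_, ?_⟩
  · rw [LinearEquiv.finrank_map_eq, finrank_spanS]
  · rintro x hx
    obtain ⟨y, hy, rfl⟩ := Submodule.mem_map.mp hx
    have happ : ((T.toLinearEquiv' hTinv : (m → ℝ) →ₗ[ℝ] (m → ℝ)) : (m → ℝ) → m → ℝ) y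
        = T *ᵥ y := rfl
    refine ⟨y, spanS_apply hy, ?_, ?_⟩
    · rw [happ, dot_conj]
      have e1 : Tᵀ * A * T = diagonal hC.eigenvalues := by
        calc Tᵀ * A * T = star U * (S * A * S) * U := by
              rw [hTt, hT]; simp only [Matrix.mul_assoc]
          _ = diagonal hC.eigenvalues := hdiag
      rw [e1, dot_diagonal]
    · rw [happ, dot_conj]
      have e1 : Tᵀ * P * T = 1 := by
        calc Tᵀ * P * T = star U * (S * P * S) * U := by
              rw [hTt, hT]; simp only [Matrix.mul_assoc]
          _ = 1 := by rw [hSPS, Matrix.mul_one, hU1]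
      rw [e1, dot_one]

end AuxSpan

private lemma sortVal_congr {m : Type*} [Fintype m] (i1 i2 : DecidableEq m)
    {M₁ M₂ : Matrix m m ℝ} (h : M₁ = M₂) (h₁ : M₁.IsHermitian) (h₂ : M₂.IsHermitian)
    (k : Fin (Fintype.card m)) :
    (@Matrix.IsHermitian.eigenvalues₀ ℝ _ m _ M₁ i1 h₁)
        (Tuple.sort (@Matrix.IsHermitian.eigenvalues₀ ℝ _ m _ M₁ i1 h₁) k) =
      (@Matrix.IsHermitian.eigenvalues₀ ℝ _ m _ M₂ i2 h₂)
        (Tuple.sort (@Matrix.IsHermitian.eigenvalues₀ ℝ _ m _ M₂ i2 h₂) k) := by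
  obtain rfl : i1 = i2 := Subsingleton.elim _ _
  subst h
  exact congrArg (fun h : M₁.IsHermitian =>
    (@Matrix.IsHermitian.eigenvalues₀ ℝ _ m _ M₁ i1 h)
      (Tuple.sort (@Matrix.IsHermitian.eigenvalues₀ ℝ _ m _ M₁ i1 h) k))
    (Subsingleton.elim h₁ h₂)

private lemma genEig_eq {m : Type*} [Fintype m] [DecidableEq m] (A B : Matrix m m ℝ)
    (hA : A.IsHermitian) (hB : B.PosDef)
    (hC : (CFC.sqrt B⁻¹ * A * CFC.sqrt B⁻¹).IsHermitian)
    (k : Fin (Fintype.card m)) :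
    genEig A B k = hC.eigenvalues₀ (Tuple.sort hC.eigenvalues₀ k) := by
  rw [genEig, dif_pos ⟨hA, hB⟩]
  apply sortVal_congr
  congr!

private lemma eigenvalues₀_eq {m : Type*} [Fintype m] [DecidableEq m]
    {C : Matrix m m ℝ} (hC : C.IsHermitian) (i : Fin (Fintype.card m)) :
    hC.eigenvalues₀ i = hC.eigenvalues (Fintype.equivOfCardEq (Fintype.card_fin _) i) := by
  rw [Matrix.IsHermitian.eigenvalues]
  simp

set_option maxHeartbeats 1000000 in
private lemma genEig_mono {m : Type*} [Fintype m] [DecidableEq m]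
    (A P Q : Matrix m m ℝ) (hA : A.PosSemidef) (hP : P.PosDef)
    (hQ : Q.PosDef) (hPQ : ∀ x : m → ℝ, x ⬝ᵥ (Q *ᵥ x) ≤ x ⬝ᵥ (P *ᵥ x))
    (k : Fin (Fintype.card m)) :
    genEig A P k ≤ genEig A Q k := by
  classical
  have hSP : (CFC.sqrt P⁻¹).IsHermitian :=
    (CFC.sqrt_nonneg P⁻¹).posSemidef.isHermitian
  have hSQ : (CFC.sqrt Q⁻¹).IsHermitian :=
    (CFC.sqrt_nonneg Q⁻¹).posSemidef.isHermitian
  have hCP : (CFC.sqrt P⁻¹ * A * CFC.sqrt P⁻¹).IsHermitian := by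
    show _ᴴ = _
    rw [conjTranspose_mul, conjTranspose_mul, hSP.eq, hA.isHermitian.eq, Matrix.mul_assoc]
  have hCQ : (CFC.sqrt Q⁻¹ * A * CFC.sqrt Q⁻¹).IsHermitian := by
    show _ᴴ = _
    rw [conjTranspose_mul, conjTranspose_mul, hSQ.eq, hA.isHermitian.eq, Matrix.mul_assoc]
  set e : Fin (Fintype.card m) ≃ m := Fintype.equivOfCardEq (Fintype.card_fin _) with he
  set fP := hCP.eigenvalues₀ with hfP
  set fQ := hCQ.eigenvalues₀ with hfQ
  set σP := Tuple.sort fP with hσP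
  set σQ := Tuple.sort fQ with hσQ
  rw [genEig_eq A P hA.isHermitian hP hCP k, genEig_eq A Q hA.isHermitian hQ hCQ k]
  set cP := fP (σP k) with hcP
  set cQ := fQ (σQ k) with hcQ
  set sTop : Finset m := (Finset.Ici k).image (fun a => e (σP a)) with hsTop
  set sLow : Finset m := (Finset.Iic k).image (fun a => e (σQ a)) with hsLow
  obtain ⟨V, hVrank, hVmem⟩ := exists_subspace A P hP hCP sTop
  obtain ⟨W, hWrank, hWmem⟩ := exists_subspace A Q hQ hCQ sLow
  have hVcard : Module.finrank ℝ V = Fintype.card m - k := by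
    rw [hVrank, hsTop,
      Finset.card_image_of_injective _ (fun a b hab => σP.injective (e.injective hab)),
      Fin.card_Ici]
  have hWcard : Module.finrank ℝ W = k + 1 := by
    rw [hWrank, hsLow,
      Finset.card_image_of_injective _ (fun a b hab => σQ.injective (e.injective hab)),
      Fin.card_Iic]
  have hdim : 0 < Module.finrank ℝ ↥(V ⊓ W) := by
    have h1 := Submodule.finrank_sup_add_finrank_inf_eq V W
    have h2 : Module.finrank ℝ ↥(V ⊔ W) ≤ Fintype.card m :=
      le_trans (Submodule.finrank_le _) (le_of_eq (Module.finrank_pi ℝ))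
    have hk := k.isLt
    omega
  have : Nontrivial ↥(V ⊓ W) := Module.nontrivial_of_finrank_pos hdim
  obtain ⟨⟨x, hxVW⟩, hx0⟩ := exists_ne (0 : ↥(V ⊓ W))
  have hx : x ≠ 0 := fun h => hx0 (Subtype.ext h)
  obtain ⟨y, hy0, hyA, hyP⟩ := hVmem x hxVW.1
  obtain ⟨z, hz0, hzA, hzQ⟩ := hWmem x hxVW.2
  have hbound1 : cP * (x ⬝ᵥ (P *ᵥ x)) ≤ x ⬝ᵥ (A *ᵥ x) := by
    rw [hyA, hyP, Finset.mul_sum]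
    refine Finset.sum_le_sum fun j _ => ?_
    by_cases hj : j ∈ sTop
    · obtain ⟨a, ha, rfl⟩ := Finset.mem_image.mp hj
      have ha' : k ≤ a := Finset.mem_Ici.mp ha
      have hev : hCP.eigenvalues (e (σP a)) = fP (σP a) := by
        rw [hfP, eigenvalues₀_eq hCP, he]
      rw [hev]
      exact mul_le_mul_of_nonneg_right (Tuple.monotone_sort fP ha') (sq_nonneg _)
    · rw [hy0 j hj]
      simp
  have hbound2 : x ⬝ᵥ (A *ᵥ x) ≤ cQ * (x ⬝ᵥ (Q *ᵥ x)) := by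
    rw [hzA, hzQ, Finset.mul_sum]
    refine Finset.sum_le_sum fun j _ => ?_
    by_cases hj : j ∈ sLow
    · obtain ⟨a, ha, rfl⟩ := Finset.mem_image.mp hj
      have ha' : a ≤ k := Finset.mem_Iic.mp ha
      have hev : hCQ.eigenvalues (e (σQ a)) = fQ (σQ a) := by
        rw [hfQ, eigenvalues₀_eq hCQ, he]
      rw [hev]
      exact mul_le_mul_of_nonneg_right (Tuple.monotone_sort fQ ha') (sq_nonneg _)
    · rw [hz0 j hj]
      simp
  have hcQ0 : 0 ≤ cQ := by
    have hpsd : (CFC.sqrt Q⁻¹ * A * CFC.sqrt Q⁻¹).PosSemidef := by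
      have h := hA.mul_mul_conjTranspose_same (CFC.sqrt Q⁻¹)
      rwa [hSQ.eq] at h
    rw [hcQ, hfQ, eigenvalues₀_eq hCQ]
    exact hpsd.eigenvalues_nonneg _
  have hPpos : 0 < x ⬝ᵥ (P *ᵥ x) := by simpa using hP.dotProduct_mulVec_pos hx
  have hchain : cP * (x ⬝ᵥ (P *ᵥ x)) ≤ cQ * (x ⬝ᵥ (P *ᵥ x)) :=
    le_trans hbound1 (le_trans hbound2 (mul_le_mul_of_nonneg_left (hPQ x) hcQ0))
  exact le_of_mul_le_mul_right hchain hPpos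

end Sq

section AuxBand
set_option linter.unusedSectionVars false
variable {m : Type*} [Fintype m] [DecidableEq m]

private lemma isHerm_of_symm {M : Matrix m m ℝ} (h : ∀ a b, M a b = M b a) :
    M.IsHermitian := by
  ext a b
  simp only [conjTranspose_apply, star_trivial]
  exact h b a

private lemma lump_symm (M : Matrix m m ℝ) (a b : m) : lump M a b = lump M b a := by
  rcases eq_or_ne a b with rfl | h
  · rfl
  · rw [lump, Matrix.diagonal_apply_ne _ h, Matrix.diagonal_apply_ne _ (Ne.symm h)]

/-- quadratic form of the lumped matrix dominates that of the original. -/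
private lemma lump_quad {E : Matrix m m ℝ} (hE : ∀ a b, E a b = E b a) (x : m → ℝ) :
    x ⬝ᵥ (E *ᵥ x) ≤ x ⬝ᵥ (lump E *ᵥ x) := by
  have hL : x ⬝ᵥ (lump E *ᵥ x) = ∑ a, ∑ b, |E a b| * x a ^ 2 := by
    calc x ⬝ᵥ (lump E *ᵥ x) = ∑ a, x a * ((∑ b, |E a b|) * x a) := by
          simp [lump, dotProduct, mulVec_diagonal]
      _ = ∑ a, ∑ b, |E a b| * x a ^ 2 := Finset.sum_congr rfl fun a _ => by
          rw [Finset.sum_mul, Finset.mul_sum]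
          exact Finset.sum_congr rfl fun b _ => by ring
  have hR : x ⬝ᵥ (E *ᵥ x) = ∑ a, ∑ b, x a * (E a b * x b) := by
    simp [dotProduct, mulVec, Finset.mul_sum]
  rw [hL, hR]
  have hA : ∑ a, ∑ b, x a * (E a b * x b) = ∑ a, ∑ b, x b * (E a b * x a) := by
    rw [Finset.sum_comm]
    exact Finset.sum_congr rfl fun a _ => Finset.sum_congr rfl fun b _ => by
      rw [hE b a]
  have hB : ∑ a, ∑ b, |E a b| * x a ^ 2 = ∑ a, ∑ b, |E a b| * x b ^ 2 := by
    rw [Finset.sum_comm]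
    exact Finset.sum_congr rfl fun a _ => Finset.sum_congr rfl fun b _ => by
      rw [hE b a]
  have key : ∀ a b, x a * (E a b * x b) + x b * (E a b * x a) ≤
      |E a b| * x a ^ 2 + |E a b| * x b ^ 2 := fun a b => by
    nlinarith [mul_nonneg (abs_nonneg (E a b)) (sq_nonneg (x a - x b)),
      mul_nonneg (abs_nonneg (E a b)) (sq_nonneg (x a + x b)),
      le_abs_self (E a b), neg_abs_le (E a b)]
  have h2 : (∑ a, ∑ b, x a * (E a b * x b)) + (∑ a, ∑ b, x b * (E a b * x a)) ≤
      (∑ a, ∑ b, |E a b| * x a ^ 2) + (∑ a, ∑ b, |E a b| * x b ^ 2) := by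
    rw [← Finset.sum_add_distrib, ← Finset.sum_add_distrib]
    refine Finset.sum_le_sum fun a _ => ?_
    rw [← Finset.sum_add_distrib, ← Finset.sum_add_distrib]
    exact Finset.sum_le_sum fun b _ => key a b
  rw [← hA] at h2
  rw [← hB] at h2
  linarith

end AuxBand

section Band
variable {N : ℕ}

private lemma diagBand_symm {B : Matrix (Fin N) (Fin N) ℝ}
    (hB : ∀ a b, B a b = B b a) (i : ℕ) (a b : Fin N) :
    diagBand B i a b = diagBand B i b a := by
  simp only [diagBand, of_apply]
  rw [abs_sub_comm]
  exact if_congr Iff.rfl (hB a b) rfl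

private lemma abs_R_split (B : Matrix (Fin N) (Fin N) ℝ) (i : ℕ) (a b : Fin N) :
    |(B - diagBand B i) a b| =
      |(B - diagBand B (i + 1)) a b| + |(diagBand B (i + 1) - diagBand B i) a b| := by
  simp only [Matrix.sub_apply, diagBand, of_apply, Nat.cast_add, Nat.cast_one]
  by_cases h1 : |((a : ℕ) : ℤ) - ((b : ℕ) : ℤ)| < (i : ℤ)
  · have h2 : |((a : ℕ) : ℤ) - ((b : ℕ) : ℤ)| < (i : ℤ) + 1 := by omega
    simp [h1, h2]
  · by_cases h2 : |((a : ℕ) : ℤ) - ((b : ℕ) : ℤ)| < (i : ℤ) + 1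
    · simp [h1, h2]
    · simp [h1, h2]

private lemma lump_split (B : Matrix (Fin N) (Fin N) ℝ) (i : ℕ) :
    lump (B - diagBand B i) =
      lump (B - diagBand B (i + 1)) + lump (diagBand B (i + 1) - diagBand B i) := by
  ext a b
  rcases eq_or_ne a b with rfl | hab
  · simp only [lump, Matrix.add_apply, diagonal_apply_eq, ← Finset.sum_add_distrib]
    exact Finset.sum_congr rfl fun c _ => abs_R_split B i a c
  · simp only [lump, Matrix.add_apply, diagonal_apply_ne _ hab, add_zero]

private lemma precond_succ (B : Matrix (Fin N) (Fin N) ℝ) (i : ℕ) :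
    precond B i = precond B (i + 1) +
      (lump (diagBand B (i + 1) - diagBand B i) - (diagBand B (i + 1) - diagBand B i)) := by
  unfold precond
  rw [lump_split B i]
  abel

private lemma precond_eq_add (B : Matrix (Fin N) (Fin N) ℝ) (i : ℕ) :
    precond B i = B + (lump (B - diagBand B i) - (B - diagBand B i)) := by
  unfold precond
  abel

private lemma posDef_of_quad {M : Matrix (Fin N) (Fin N) ℝ} (h1 : M.IsHermitian)
    (h2 : ∀ x : Fin N → ℝ, x ≠ 0 → 0 < x ⬝ᵥ (M *ᵥ x)) : M.PosDef :=
  .of_dotProduct_mulVec_pos h1 fun x hx => by simpa using h2 x hx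

private lemma precond_posDef {B : Matrix (Fin N) (Fin N) ℝ} (hB : B.PosDef) (i : ℕ) :
    (precond B i).PosDef := by
  have hBs : ∀ a b, B a b = B b a := fun a b => by
    conv_lhs => rw [← hB.isHermitian.eq]
    simp [conjTranspose_apply]
  have hRs : ∀ a b, (B - diagBand B i) a b = (B - diagBand B i) b a := fun a b => by
    simp only [Matrix.sub_apply]
    rw [hBs a b, diagBand_symm hBs i a b]
  refine posDef_of_quad (isHerm_of_symm fun a b => ?_) fun x hx => ?_
  · simp only [precond, Matrix.add_apply]
    rw [diagBand_symm hBs i a b, lump_symm]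
  · have hq : 0 < x ⬝ᵥ (B *ᵥ x) := by simpa using hB.dotProduct_mulVec_pos hx
    have hlump := lump_quad hRs x
    simp only [sub_mulVec, dotProduct_sub] at hlump
    rw [precond_eq_add]
    simp only [add_mulVec, sub_mulVec, dotProduct_add, dotProduct_sub]
    linarith

private lemma precond_quad_succ_le {B : Matrix (Fin N) (Fin N) ℝ} (hB : B.PosDef) (i : ℕ)
    (x : Fin N → ℝ) :
    x ⬝ᵥ (precond B (i + 1) *ᵥ x) ≤ x ⬝ᵥ (precond B i *ᵥ x) := by
  have hBs : ∀ a b, B a b = B b a := fun a b => by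
    conv_lhs => rw [← hB.isHermitian.eq]
    simp [conjTranspose_apply]
  have hEs : ∀ a b, (diagBand B (i + 1) - diagBand B i) a b =
      (diagBand B (i + 1) - diagBand B i) b a := fun a b => by
    simp only [Matrix.sub_apply]
    rw [diagBand_symm hBs (i + 1) a b, diagBand_symm hBs i a b]
  have hlump := lump_quad hEs x
  simp only [sub_mulVec, dotProduct_sub] at hlump
  rw [precond_succ B i]
  simp only [add_mulVec, sub_mulVec, dotProduct_add, dotProduct_sub]
  linarith

private lemma diag_pos {B : Matrix (Fin N) (Fin N) ℝ} (hB : B.PosDef) (a : Fin N) :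
    0 < B a a := by
  have h := hB.dotProduct_mulVec_pos (x := Pi.single a 1) (by
    intro h
    have := congrFun h a
    simp at this)
  simpa [dotProduct, mulVec, Pi.single_apply, Finset.mul_sum] using h

private lemma precond_one {B : Matrix (Fin N) (Fin N) ℝ} (hB : B.PosDef) :
    precond B 1 = lump B := by
  have habs : ∀ a b : Fin N, (|((a : ℕ) : ℤ) - ((b : ℕ) : ℤ)| < ((1 : ℕ) : ℤ)) ↔ a = b := by
    intro a b
    constructor
    · intro h
      have h' := abs_lt.mp h
      have : (a : ℕ) = (b : ℕ) := by omega
      exact Fin.ext this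
    · rintro rfl; simp
  ext a b
  rw [precond, Matrix.add_apply]
  rcases eq_or_ne a b with rfl | hab
  · have h1 : diagBand B 1 a a = B a a := by
      rw [diagBand, of_apply, if_pos ((habs a a).mpr rfl)]
    have hsum : ∀ j, |(B - diagBand B 1) a j| = if j = a then 0 else |B a j| := by
      intro j
      rw [Matrix.sub_apply, diagBand, of_apply]
      by_cases hj : j = a
      · subst hj
        rw [if_pos ((habs j j).mpr rfl), if_pos rfl]
        simp
      · rw [if_neg (fun h => hj (((habs a j).mp h).symm)), if_neg hj]
        simp
    have h2 : lump (B - diagBand B 1) a a = ∑ j, if j = a then (0 : ℝ) else |B a j| := by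
      rw [lump, diagonal_apply_eq]
      exact Finset.sum_congr rfl fun j _ => hsum j
    have h3 : lump B a a = ∑ j, |B a j| := by rw [lump, diagonal_apply_eq]
    rw [h1, h2, h3, ← Finset.add_sum_erase _ (fun j => if j = a then (0 : ℝ) else |B a j|)
      (Finset.mem_univ a), ← Finset.add_sum_erase _ (fun j => |B a j|) (Finset.mem_univ a),
      if_pos rfl, zero_add, abs_of_pos (diag_pos hB a)]
    exact congrArg (B a a + ·) (Finset.sum_congr rfl fun j hj =>
      if_neg (Finset.ne_of_mem_erase hj))
  · have h1 : diagBand B 1 a b = 0 := by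
      rw [diagBand, of_apply, if_neg (fun h => hab ((habs a b).mp h))]
    rw [h1, lump, lump, diagonal_apply_ne _ hab, diagonal_apply_ne _ hab, add_zero]

private lemma precond_top {n : ℕ} (B : Matrix (Fin (n + 1)) (Fin (n + 1)) ℝ) :
    precond B (n + 1) = B := by
  have hband : diagBand B (n + 1) = B := by
    ext a b
    simp only [diagBand, of_apply]
    rw [if_pos]
    have ha := a.isLt
    have hb := b.isLt
    rw [abs_lt]
    push_cast
    omega
  rw [precond, hband, sub_self]
  have h0 : lump (0 : Matrix (Fin (n + 1)) (Fin (n + 1)) ℝ) = 0 := by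
    ext a b
    simp [lump, Matrix.diagonal_apply]
  rw [h0, add_zero]

end Band

/-- `λ_k(B, P_i) ≤ λ_k(B, P_{i+1})`, and consequently
`λ_k(K, 𝓛(B)) = λ_k(K, P_1) ≤ … ≤ λ_k(K, P_n) = λ_k(K, B)` for any SPD `K`. -/
theorem stmt_18 {n : ℕ} (B K : Matrix (Fin (n + 1)) (Fin (n + 1)) ℝ)
    (hB : B.PosDef) (hK : K.PosDef) :
    (∀ i : ℕ, 1 ≤ i → i ≤ n → ∀ k : Fin (n + 1),
      genEigFin B (precond B i) k ≤ genEigFin B (precond B (i + 1)) k) ∧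
    (∀ k : Fin (n + 1), genEigFin K (lump B) k = genEigFin K (precond B 1) k) ∧
    (∀ i : ℕ, 1 ≤ i → i ≤ n → ∀ k : Fin (n + 1),
      genEigFin K (precond B i) k ≤ genEigFin K (precond B (i + 1)) k) ∧
    (∀ k : Fin (n + 1), genEigFin K (precond B (n + 1)) k = genEigFin K B k) := by
  refine ⟨?_, ?_, ?_, ?_⟩
  · intro i _ _ k
    exact genEig_mono B (precond B i) (precond B (i + 1)) hB.posSemidef
      (precond_posDef hB i) (precond_posDef hB (i + 1)) (precond_quad_succ_le hB i) _
  · intro k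
    rw [genEigFin, genEigFin, precond_one hB]
  · intro i _ _ k
    exact genEig_mono K (precond B i) (precond B (i + 1)) hK.posSemidef
      (precond_posDef hB i) (precond_posDef hB (i + 1)) (precond_quad_succ_le hB i) _
  · intro k
    rw [genEigFin, genEigFin, precond_top B]
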